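/- Let H be a real Hilbert space, L ≥ 0, N ≥ 1, ξ_1, …, ξ_N ∈ H, and y_1, …, y_N ∈ ℝ. Then for every x ∈ H, min_{λ ∈ Δ_N} { Σ_{n=1}^N λ_n y_n + L‖x − Σ_{n=1}^N λ_n ξ_n‖ } = sup_{p ∈ H, ‖p‖ ≤ L} { ⟨p, x⟩ + min_{1 ≤ n ≤ N} ( y_n − ⟨p, ξ_n⟩ ) }. -/

import Mathlib

open scoped RealInnerProductSpace

set_option maxHeartbeats 1000000 in
/-- minimax duality between the primal and dual reconstruction
functionals. -/
theorem primal_dual_reconstruction_eq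
    {H : Type*} [NormedAddCommGroup H] [InnerProductSpace ℝ H] [CompleteSpace H]
    (L : ℝ) (hL : 0 ≤ L) (N : ℕ) (hN : 1 ≤ N) (ξ : Fin N → H) (y : Fin N → ℝ) :
    ∀ x : H,
      (⨅ l : stdSimplex ℝ (Fin N),
        (∑ n, l.1 n * y n + L * ‖x - ∑ n, l.1 n • ξ n‖))
      = ⨆ p : {p : H // ‖p‖ ≤ L},
          (⟪p.1, x⟫ + ⨅ n : Fin N, (y n - ⟪p.1, ξ n⟫)) := by
  intro x
  have hNe : Nonempty (Fin N) := ⟨⟨0, hN⟩⟩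
  have hNz : (N : ℝ) ≠ 0 := Nat.cast_ne_zero.mpr (by omega)
  have hSne : Nonempty (stdSimplex ℝ (Fin N)) := by
    refine ⟨⟨fun _ => (N : ℝ)⁻¹, fun _ => by positivity, ?_⟩⟩
    simp [Finset.sum_const, Finset.card_univ, mul_inv_cancel₀ hNz]
  set F : stdSimplex ℝ (Fin N) → ℝ :=
    fun l => ∑ n, l.1 n * y n + L * ‖x - ∑ n, l.1 n • ξ n‖ with hFdef
  -- lower bound for F
  have hyb : BddBelow (Set.range y) := (Set.finite_range y).bddBelow
  have hFlb : ∀ l : stdSimplex ℝ (Fin N), (⨅ n, y n) ≤ F l := by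
    intro l
    have h1 : (⨅ n, y n) ≤ ∑ n, l.1 n * y n := by
      calc (⨅ n, y n) = ∑ n, l.1 n * (⨅ k, y k) := by
            rw [← Finset.sum_mul, l.2.2, one_mul]
        _ ≤ ∑ n, l.1 n * y n := by
            refine Finset.sum_le_sum fun n _ => ?_
            exact mul_le_mul_of_nonneg_left (ciInf_le hyb n) (l.2.1 n)
    have h2 : 0 ≤ L * ‖x - ∑ n, l.1 n • ξ n‖ := by positivity
    simpa [hFdef] using add_le_add h1 h2
  have hFbdd : BddBelow (Set.range F) := ⟨⨅ n, y n, by rintro _ ⟨l, rfl⟩; exact hFlb l⟩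
  set m : ℝ := ⨅ l, F l with hmdef
  have hmle : ∀ l : stdSimplex ℝ (Fin N), m ≤ F l := fun l => ciInf_le hFbdd l
  -- the dual objective
  set G : {p : H // ‖p‖ ≤ L} → ℝ :=
    fun p => ⟪p.1, x⟫ + ⨅ n : Fin N, (y n - ⟪p.1, ξ n⟫) with hGdef
  -- easy direction : every G p is ≤ every F l
  have hGF : ∀ p : {p : H // ‖p‖ ≤ L}, ∀ l : stdSimplex ℝ (Fin N), G p ≤ F l := by
    intro p l
    have hib : BddBelow (Set.range fun n => y n - ⟪p.1, ξ n⟫) :=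
      (Set.finite_range _).bddBelow
    have h1 : (⨅ n, (y n - ⟪p.1, ξ n⟫)) ≤ ∑ n, l.1 n * (y n - ⟪p.1, ξ n⟫) := by
      calc (⨅ n, (y n - ⟪p.1, ξ n⟫))
          = ∑ n, l.1 n * (⨅ k, (y k - ⟪p.1, ξ k⟫)) := by
            rw [← Finset.sum_mul, l.2.2, one_mul]
        _ ≤ ∑ n, l.1 n * (y n - ⟪p.1, ξ n⟫) := by
            refine Finset.sum_le_sum fun n _ => ?_
            exact mul_le_mul_of_nonneg_left (ciInf_le hib n) (l.2.1 n)
    have h2 : ∑ n, l.1 n * ⟪p.1, ξ n⟫ = ⟪p.1, ∑ n, l.1 n • ξ n⟫ := by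
      rw [inner_sum]
      exact Finset.sum_congr rfl fun n _ => (real_inner_smul_right _ _ _).symm
    have h3 : ⟪p.1, x - ∑ n, l.1 n • ξ n⟫ ≤ L * ‖x - ∑ n, l.1 n • ξ n‖ := by
      calc ⟪p.1, x - ∑ n, l.1 n • ξ n⟫ ≤ ‖p.1‖ * ‖x - ∑ n, l.1 n • ξ n‖ :=
            real_inner_le_norm _ _
        _ ≤ L * ‖x - ∑ n, l.1 n • ξ n‖ :=
            mul_le_mul_of_nonneg_right p.2 (norm_nonneg _)
    have h4 : G p ≤ ⟪p.1, x⟫ + ∑ n, l.1 n * (y n - ⟪p.1, ξ n⟫) := by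
      simpa [hGdef] using add_le_add_left h1 (⟪p.1, x⟫)
    have h5 : ⟪p.1, x⟫ + ∑ n, l.1 n * (y n - ⟪p.1, ξ n⟫)
        = ∑ n, l.1 n * y n + ⟪p.1, x - ∑ n, l.1 n • ξ n⟫ := by
      rw [inner_sub_right, ← h2]
      simp [mul_sub, Finset.sum_sub_distrib]
      ring
    calc G p ≤ ∑ n, l.1 n * y n + ⟪p.1, x - ∑ n, l.1 n • ξ n⟫ := by rw [← h5]; exact h4
      _ ≤ ∑ n, l.1 n * y n + L * ‖x - ∑ n, l.1 n • ξ n‖ := add_le_add_right h3 _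
      _ = F l := rfl
  have hGm : ∀ p, G p ≤ m := fun p => le_ciInf fun l => hGF p l
  -- hard direction: construct p with m ≤ G p, via Hahn-Banach separation
  have hard : ∃ p : {p : H // ‖p‖ ≤ L}, m ≤ G p := by
    set v : Fin N → H × ℝ := fun n => (ξ n - x, y n - m) with hvdef
    set K : Set (H × ℝ) := {z | z.2 + L * ‖z.1‖ < 0} with hKdef
    have hKopen : IsOpen K := by
      have : Continuous fun z : H × ℝ => z.2 + L * ‖z.1‖ :=
        continuous_snd.add (continuous_const.mul (continuous_fst.norm))
      exact isOpen_lt this continuous_const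
    have hKconv : Convex ℝ K := by
      intro z hz w hw a b ha hb hab
      simp only [hKdef, Set.mem_setOf_eq] at hz hw ⊢
      rcases eq_or_lt_of_le ha with h | h
      · have hb1 : b = 1 := by linarith
        rw [← h, hb1]
        simpa using hw
      · have hn : ‖(a • z + b • w).1‖ ≤ a * ‖z.1‖ + b * ‖w.1‖ := by
          calc ‖a • z.1 + b • w.1‖ ≤ ‖a • z.1‖ + ‖b • w.1‖ := norm_add_le _ _
            _ = a * ‖z.1‖ + b * ‖w.1‖ := by
                rw [norm_smul, norm_smul, Real.norm_eq_abs, Real.norm_eq_abs,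
                  abs_of_nonneg ha, abs_of_nonneg hb]
        have hsnd : (a • z + b • w).2 = a * z.2 + b * w.2 := rfl
        have h1 := mul_neg_of_pos_of_neg h hz
        have h2 := mul_le_mul_of_nonneg_left hw.le hb
        have h3 := mul_le_mul_of_nonneg_left hn hL
        rw [hsnd]
        nlinarith [h1, h2, h3]
    let T : (Fin N → ℝ) →ₗ[ℝ] H × ℝ :=
      { toFun := fun l => ∑ n, l n • v n
        map_add' := fun a b => by
          simp [add_smul, Finset.sum_add_distrib]
        map_smul' := fun r a => by
          simp [smul_smul, Finset.smul_sum] }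
    have hTconv : Convex ℝ (T '' stdSimplex ℝ (Fin N)) :=
      (convex_stdSimplex ℝ _).linear_image T
    -- key computation of T l for l in the simplex
    have hTl : ∀ l : Fin N → ℝ, l ∈ stdSimplex ℝ (Fin N) →
        (T l).1 = (∑ n, l n • ξ n) - x ∧ (T l).2 = (∑ n, l n * y n) - m := by
      intro l hl
      constructor
      · rw [show T l = ∑ n, l n • v n from rfl, Prod.fst_sum]
        simp only [hvdef, Prod.smul_mk, Prod.smul_fst]
        simp only [smul_sub, Finset.sum_sub_distrib, ← Finset.sum_smul, hl.2, one_smul]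
      · rw [show T l = ∑ n, l n • v n from rfl, Prod.snd_sum]
        simp only [hvdef, Prod.smul_mk, Prod.smul_snd, smul_eq_mul]
        simp only [mul_sub, Finset.sum_sub_distrib, ← Finset.sum_mul, hl.2, one_mul]
    have hdisj : Disjoint K (T '' stdSimplex ℝ (Fin N)) := by
      rw [Set.disjoint_left]
      rintro z hzK ⟨l, hl, rfl⟩
      obtain ⟨h1, h2⟩ := hTl l hl
      simp only [hKdef, Set.mem_setOf_eq] at hzK
      have : m ≤ F ⟨l, hl⟩ := hmle ⟨l, hl⟩
      have hnorm : ‖(T l).1‖ = ‖x - ∑ n, l n • ξ n‖ := by rw [h1, norm_sub_rev]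
      rw [h2, hnorm] at hzK
      simp only [hFdef] at this
      nlinarith
    obtain ⟨f, u, hfK, hfT⟩ := geometric_hahn_banach_open hKconv hKopen hTconv hdisj
    set s0 : ℝ := f (0, 1) with hs0def
    set g : H →L[ℝ] ℝ := f.comp (ContinuousLinearMap.inl ℝ H ℝ) with hgdef
    have hsplit : ∀ (c : H) (b : ℝ), f (c, b) = g c + b * s0 := by
      intro c b
      have : ((c, b) : H × ℝ) = (c, 0) + b • ((0 : H), (1 : ℝ)) := by
        simp [Prod.ext_iff]
      rw [this, map_add, map_smul, smul_eq_mul]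
      rfl
    -- membership facts for K
    have hKmem : ∀ (c : H) (b : ℝ), b + L * ‖c‖ < 0 → g c + b * s0 < u := by
      intro c b hb
      have := hfK (c, b) (by simpa [hKdef] using hb)
      rwa [hsplit] at this
    -- s0 ≥ 0
    have hs0nn : 0 ≤ s0 := by
      by_contra hcon
      push_neg at hcon
      have ht : ∀ t : ℝ, 0 < t → (-t) * s0 < u := by
        intro t ht
        have := hKmem 0 (-t) (by simpa using (by linarith : (-t : ℝ) < 0))
        simpa using this
      have hne : s0 ≠ 0 := ne_of_lt hcon
      have h1 := ht ((|u| + 1) / (-s0)) (div_pos (by positivity) (by linarith))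
      have h2 : -((|u| + 1) / (-s0)) * s0 = |u| + 1 := by
        rw [div_neg, neg_neg, div_mul_cancel₀ _ hne]
      rw [h2] at h1
      have := le_abs_self u
      linarith
    -- the bound g c ≤ s0 * L * ‖c‖
    have hgb : ∀ c : H, g c ≤ s0 * L * ‖c‖ := by
      intro c
      by_contra hcon
      push_neg at hcon
      set δ : ℝ := g c - s0 * L * ‖c‖ with hδ
      have hδpos : 0 < δ := by simp [hδ]; linarith
      set t : ℝ := (s0 + |u| + 1) / δ with htdef
      have htpos : 0 < t := by positivity
      have hmem : (-(L * ‖t • c‖) - 1) + L * ‖t • c‖ < 0 := by linarith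
      have h1 := hKmem (t • c) (-(L * ‖t • c‖) - 1) hmem
      have h2 : g (t • c) = t * g c := by
        rw [← smul_eq_mul, ← map_smul]
      have h3 : ‖t • c‖ = t * ‖c‖ := by
        rw [norm_smul, Real.norm_eq_abs, abs_of_pos htpos]
      rw [h2, h3] at h1
      have h4 : t * g c + (-(L * (t * ‖c‖)) - 1) * s0
          = t * δ - s0 := by rw [hδ]; ring
      rw [h4] at h1
      have h5 : t * δ = s0 + |u| + 1 := by rw [htdef]; field_simp
      have := le_abs_self u
      linarith [h5 ▸ h1]
    -- u ≥ 0 would follow; but we mainly need u > something. First: s0 > 0.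
    have hs0pos : 0 < s0 := by
      rcases lt_or_eq_of_le hs0nn with h | h
      · exact h
      · exfalso
        have hg0 : ∀ c : H, g c ≤ 0 := by
          intro c; have := hgb c; rw [← h] at this; simpa using this
        have hgz : ∀ c : H, g c = 0 := by
          intro c
          have h1 := hg0 c
          have h2 := hg0 (-c)
          rw [map_neg] at h2
          linarith
        -- f vanishes on K and on T image, contradiction
        have hu1 : (0 : ℝ) < u := by
          have := hKmem 0 (-1) (by simp)
          rw [hgz, ← h] at this
          simpa using this
        obtain ⟨n⟩ := hNe
        have hvn : v n ∈ T '' stdSimplex ℝ (Fin N) := by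
          refine ⟨Pi.single n 1, ⟨fun k => ?_, by simp⟩, ?_⟩
          · by_cases hk : k = n <;> simp [Pi.single_apply, hk]
          · simp only [T, LinearMap.coe_mk, AddHom.coe_mk]
            rw [Finset.sum_eq_single n]
            · simp
            · intro k _ hk; simp [Pi.single_apply, hk]
            · intro hk; exact absurd (Finset.mem_univ n) hk
        have := hfT _ hvn
        rw [show f (v n) = g (v n).1 + (v n).2 * s0 from hsplit _ _, hgz, ← h] at this
        simp at this
        linarith
    -- u ≥ 0
    have hunn : 0 ≤ u := by
      by_contra hcon
      push_neg at hcon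
      set ε : ℝ := -u / (2 * s0) with hε
      have hεpos : 0 < ε := div_pos (by linarith) (by linarith)
      have h1 := hKmem 0 (-ε) (by simpa using (by linarith : (-ε : ℝ) < 0))
      rw [map_zero] at h1
      have : -ε * s0 = u / 2 := by rw [hε]; field_simp
      rw [this] at h1
      linarith
    -- inequality at each vertex
    have hvert : ∀ n : Fin N, 0 ≤ g (ξ n - x) + (y n - m) * s0 := by
      intro n
      have hvn : v n ∈ T '' stdSimplex ℝ (Fin N) := by
        refine ⟨Pi.single n 1, ⟨fun k => ?_, by simp⟩, ?_⟩
        · by_cases hk : k = n <;> simp [Pi.single_apply, hk]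
        · simp only [T, LinearMap.coe_mk, AddHom.coe_mk]
          rw [Finset.sum_eq_single n]
          · simp
          · intro k _ hk; simp [Pi.single_apply, hk]
          · intro hk; exact absurd (Finset.mem_univ n) hk
      have := hfT _ hvn
      rw [show f (v n) = g (v n).1 + (v n).2 * s0 from hsplit _ _] at this
      simp only [hvdef] at this
      linarith
    -- operator norm bound and Riesz representation
    have hgnorm : ‖g‖ ≤ s0 * L := by
      refine ContinuousLinearMap.opNorm_le_bound g (by positivity) fun c => ?_
      rw [Real.norm_eq_abs, abs_le]
      constructor
      · have := hgb (-c)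
        rw [map_neg, norm_neg] at this
        linarith
      · exact hgb c
    set p0 : H := (InnerProductSpace.toDual ℝ H).symm g with hp0
    have hp0inner : ∀ c : H, ⟪p0, c⟫ = g c := fun c => by
      rw [hp0]; exact InnerProductSpace.toDual_symm_apply
    have hp0norm : ‖p0‖ ≤ s0 * L := by
      rw [hp0, LinearIsometryEquiv.norm_map]
      exact hgnorm
    set p : H := -(s0⁻¹ • p0) with hpdef
    have hpnorm : ‖p‖ ≤ L := by
      rw [hpdef, norm_neg, norm_smul, Real.norm_eq_abs, abs_of_pos (inv_pos.mpr hs0pos)]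
      rw [inv_mul_le_iff₀ hs0pos]
      linarith [hp0norm]
    have hpinner : ∀ c : H, ⟪p, c⟫ = -(s0⁻¹ * g c) := by
      intro c
      rw [hpdef, inner_neg_left, real_inner_smul_left, hp0inner]
    refine ⟨⟨p, hpnorm⟩, ?_⟩
    have hkey : ∀ n : Fin N, m - ⟪p, x⟫ ≤ y n - ⟪p, ξ n⟫ := by
      intro n
      have h1 := hvert n
      have h2 : ⟪p, ξ n⟫ - ⟪p, x⟫ = ⟪p, ξ n - x⟫ := (inner_sub_right _ _ _).symm
      rw [hpinner (ξ n - x)] at h2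
      have h3 : -(s0⁻¹ * g (ξ n - x)) ≤ y n - m := by
        rw [neg_le, ← mul_le_mul_iff_right₀ hs0pos]
        have : s0 * (s0⁻¹ * g (ξ n - x)) = g (ξ n - x) := by field_simp
        rw [mul_neg, this]
        nlinarith
      linarith
    have : m - ⟪p, x⟫ ≤ ⨅ n : Fin N, (y n - ⟪p, ξ n⟫) := le_ciInf hkey
    simp only [hGdef]
    linarith
  have hPne : Nonempty {p : H // ‖p‖ ≤ L} := ⟨⟨0, by simpa using hL⟩⟩
  -- conclude
  obtain ⟨p, hp⟩ := hard
  have hbddG : BddAbove (Set.range G) := ⟨m, by rintro _ ⟨q, rfl⟩; exact hGm q⟩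
  refine le_antisymm ?_ (ciSup_le hGm)
  calc m ≤ G p := hp
    _ ≤ ⨆ q, G q := le_ciSup hbddG p
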